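/- arXiv:2408.12180 — 2 statements merged into one kernel-verified Lean document; each statement's English description precedes it below -/
import Mathlib

section
/- Let n ≥ 2 be an integer and s₁ < s₂ real numbers. Suppose θ : [s₁, s₂] → ℝ is differentiable and satisfies θ'(s) ≤ −θ(s)²/(n−1) for all s ∈ [s₁, s₂]. If θ(s₂) > 0, then θ(s) > 0 for every s ∈ [s₁, s₂], and moreover θ(s₂) ≤ θ(s₁) / (1 + ((s₂ − s₁)/(n−1))·θ(s₁)). -/
/-- Integrated form of the Riccati inequality: if `θ' ≤ -θ²/(n-1)` on `[s₁, s₂]`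
and `θ s₂ > 0`, then `θ > 0` on the whole interval and
`θ s₂ ≤ θ s₁ / (1 + ((s₂ - s₁)/(n-1)) θ s₁)`. -/
theorem riccati_integrated (n : ℕ) (hn : 2 ≤ n) (s₁ s₂ : ℝ) (hs : s₁ < s₂)
    (θ : ℝ → ℝ)
    (hdiff : ∀ s ∈ Set.Icc s₁ s₂, DifferentiableAt ℝ θ s)
    (hineq : ∀ s ∈ Set.Icc s₁ s₂, deriv θ s ≤ -(θ s) ^ 2 / (n - 1 : ℝ))
    (hpos : 0 < θ s₂) :
    (∀ s ∈ Set.Icc s₁ s₂, 0 < θ s) ∧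
      θ s₂ ≤ θ s₁ / (1 + ((s₂ - s₁) / (n - 1 : ℝ)) * θ s₁) := by
  have hn1 : (0:ℝ) < (n:ℝ) - 1 := by
    have : (2:ℝ) ≤ n := by exact_mod_cast hn
    linarith
  have hcont : ContinuousOn θ (Set.Icc s₁ s₂) :=
    fun s hs' => (hdiff s hs').continuousAt.continuousWithinAt
  -- θ is antitone on [s₁, s₂]
  have hanti : AntitoneOn θ (Set.Icc s₁ s₂) := by
    apply antitoneOn_of_deriv_nonpos (convex_Icc s₁ s₂) hcont
    · intro s hs'
      rw [interior_Icc] at hs'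
      exact (hdiff s (Set.mem_Icc_of_Ioo hs')).differentiableWithinAt
    · intro s hs'
      rw [interior_Icc] at hs'
      have h := hineq s (Set.mem_Icc_of_Ioo hs')
      have : -(θ s) ^ 2 / ((n:ℝ) - 1) ≤ 0 := by
        apply div_nonpos_of_nonpos_of_nonneg (neg_nonpos.mpr (sq_nonneg _)) hn1.le
      linarith
  have hposall : ∀ s ∈ Set.Icc s₁ s₂, 0 < θ s := by
    intro s hs'
    have := hanti hs' (Set.right_mem_Icc.mpr hs.le) hs'.2
    linarith
  refine ⟨hposall, ?_⟩
  -- ψ s = (θ s)⁻¹ - s/(n-1) is monotone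
  set ψ : ℝ → ℝ := fun s => (θ s)⁻¹ - s / ((n:ℝ) - 1) with hψ
  have hψderiv : ∀ s ∈ Set.Icc s₁ s₂,
      HasDerivAt ψ (-(deriv θ s) / (θ s) ^ 2 - 1 / ((n:ℝ) - 1)) s := by
    intro s hs'
    have h1 : HasDerivAt θ (deriv θ s) s := (hdiff s hs').hasDerivAt
    have h2 := h1.inv (ne_of_gt (hposall s hs'))
    have h3 : HasDerivAt (fun s : ℝ => s / ((n:ℝ) - 1)) (1 / ((n:ℝ) - 1)) s := by
      simpa using (hasDerivAt_id s).div_const ((n:ℝ) - 1)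
    exact h2.sub h3
  have hmono : MonotoneOn ψ (Set.Icc s₁ s₂) := by
    apply monotoneOn_of_deriv_nonneg (convex_Icc s₁ s₂)
    · intro s hs'
      exact ((hψderiv s hs').continuousAt).continuousWithinAt
    · intro s hs'
      rw [interior_Icc] at hs'
      exact (hψderiv s (Set.mem_Icc_of_Ioo hs')).differentiableAt.differentiableWithinAt
    · intro s hs'
      rw [interior_Icc] at hs'
      have hmem := Set.mem_Icc_of_Ioo hs'
      rw [(hψderiv s hmem).deriv]
      have hθ := hposall s hmem
      have h := hineq s hmem
      have hsq : (0:ℝ) < (θ s) ^ 2 := by positivity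
      rw [sub_nonneg, div_le_div_iff₀ hn1 hsq]
      have : -(θ s) ^ 2 / ((n:ℝ) - 1) * ((n:ℝ)-1) = -(θ s)^2 := by
        field_simp
      nlinarith [mul_le_mul_of_nonneg_right h hn1.le]
  have hkey := hmono (Set.left_mem_Icc.mpr hs.le) (Set.right_mem_Icc.mpr hs.le) hs.le
  simp only [hψ] at hkey
  have ha := hposall s₁ (Set.left_mem_Icc.mpr hs.le)
  have hb := hpos
  have hc : 0 < (s₂ - s₁) / ((n:ℝ) - 1) := div_pos (by linarith) hn1
  rw [le_div_iff₀ (by nlinarith)]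
  have h1 : (θ s₁)⁻¹ + (s₂ - s₁) / ((n:ℝ)-1) ≤ (θ s₂)⁻¹ := by
    have : (s₂ - s₁) / ((n:ℝ)-1) = s₂/((n:ℝ)-1) - s₁/((n:ℝ)-1) := by ring
    linarith
  have h2 : (θ s₁)⁻¹ * (θ s₁) = 1 := inv_mul_cancel₀ (ne_of_gt ha)
  have h3 : (θ s₂)⁻¹ * (θ s₂) = 1 := inv_mul_cancel₀ (ne_of_gt hb)
  nlinarith [mul_le_mul_of_nonneg_right (mul_le_mul_of_nonneg_right h1 ha.le) hb.le]
end

section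
/- Let X be a proper metric space in which every pair of points is joined by a geodesic segment, i.e. for all x, y ∈ X there exists η : [0, d(x, y)] → X with η(0) = x, η(d(x, y)) = y, and d(η(s), η(t)) = |s − t| for all s, t. Let γ : [0, ∞) → X be a geodesic ray with Busemann function b_γ, and let p ∈ X. Then there exists a geodesic ray c : [0, ∞) → X with c(0) = p such that b_γ(x) ≤ b_c(x) + b_γ(p) for all x ∈ X, where b_c is the Busemann function of c; in particular equality holds at x = p since b_c(p) = 0. -/
open Filter

/-- Asymptote construction: in a proper geodesic metric space, for any geodesic
ray `γ` with Busemann function `b_γ` and any point `p`, there is a geodesic ray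
`c` from `p` whose Busemann function `b_c` satisfies `b_γ ≤ b_c + b_γ p`, with
`b_c p = 0`. -/
theorem exists_asymptote_ray {X : Type*} [MetricSpace X] [ProperSpace X]
    (hgeod : ∀ x y : X, ∃ η : ℝ → X, η 0 = x ∧ η (dist x y) = y ∧
      ∀ s ∈ Set.Icc (0 : ℝ) (dist x y), ∀ t ∈ Set.Icc (0 : ℝ) (dist x y),
        dist (η s) (η t) = |s - t|)
    (γ : ℝ → X)
    (hray : ∀ s t : ℝ, 0 ≤ s → 0 ≤ t → dist (γ s) (γ t) = |s - t|)
    (bγ : X → ℝ)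
    (hbγ : ∀ x : X, Tendsto (fun t => dist x (γ t) - t) atTop (nhds (bγ x)))
    (p : X) :
    ∃ c : ℝ → X, c 0 = p ∧
      (∀ s t : ℝ, 0 ≤ s → 0 ≤ t → dist (c s) (c t) = |s - t|) ∧
      ∃ bc : X → ℝ,
        (∀ x : X, Tendsto (fun t => dist x (c t) - t) atTop (nhds (bc x))) ∧
        (∀ x : X, bγ x ≤ bc x + bγ p) ∧
        bc p = 0 := by
  classical
  -- basic facts about bγ
  have hbasic : ∀ (y : X) (u : ℝ), 0 ≤ u → bγ y ≤ dist y (γ u) - u := by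
    intro y u hu
    refine le_of_tendsto (hbγ y) ?_
    filter_upwards [eventually_ge_atTop u] with s hs
    have h0s : (0:ℝ) ≤ s := hu.trans hs
    have ht : dist y (γ s) ≤ dist y (γ u) + dist (γ u) (γ s) := dist_triangle _ _ _
    have hdd : dist (γ u) (γ s) = s - u := by
      rw [hray u s hu h0s, abs_of_nonpos (by linarith)]; ring
    linarith
  have hlip1 : ∀ x y : X, bγ x ≤ bγ y + dist x y := by
    intro x y
    have h1 : Tendsto (fun t => dist y (γ t) - t + dist x y) atTop
        (nhds (bγ y + dist x y)) := (hbγ y).add tendsto_const_nhds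
    refine le_of_tendsto_of_tendsto' (hbγ x) h1 fun t => ?_
    have := dist_triangle x y (γ t)
    linarith
  have hbγcont : Continuous bγ := by
    have hl : LipschitzWith 1 bγ := by
      apply LipschitzWith.of_dist_le_mul
      intro x y
      rw [Real.dist_eq, NNReal.coe_one, one_mul, abs_sub_le_iff]
      constructor
      · have := hlip1 x y; linarith
      · have := hlip1 y x; rw [dist_comm]; linarith
    exact hl.continuous
  -- geodesics from p to γ n
  choose η hη0 hη1 hηd using fun n : ℕ => hgeod p (γ (n : ℝ))
  set d : ℕ → ℝ := fun n => dist p (γ (n : ℝ)) with hdef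
  have hd_ge : ∀ n : ℕ, (n : ℝ) - dist p (γ 0) ≤ d n := by
    intro n
    have h : dist (γ 0) (γ (n:ℝ)) = (n:ℝ) := by
      rw [hray 0 n le_rfl n.cast_nonneg, abs_of_nonpos (by simp)]
      ring
    have ht := dist_triangle (γ 0) p (γ (n:ℝ))
    rw [dist_comm (γ 0) p] at ht
    simp only [hdef]
    linarith
  have hdtop : Tendsto d atTop atTop := by
    refine tendsto_atTop_mono hd_ge ?_
    exact tendsto_atTop_add_const_right _ _ tendsto_natCast_atTop_atTop
  -- ultrafilter extending atTop on ℕ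
  let U : Ultrafilter ℕ := Ultrafilter.of atTop
  have hU : (U : Filter ℕ) ≤ atTop := Ultrafilter.of_le _
  -- for each t, pick a limit of η n (max t 0) along U
  have hlim : ∀ t : ℝ, ∃ a : X, Tendsto (fun n => η n (max t 0)) (U : Filter ℕ) (nhds a) := by
    intro t
    have ht0 : 0 ≤ max t 0 := le_max_right _ _
    have hcomp : IsCompact (Metric.closedBall p (max t 0)) := isCompact_closedBall p _
    have hmem : Metric.closedBall p (max t 0) ∈ Ultrafilter.map (fun n => η n (max t 0)) U := by
      apply hU
      filter_upwards [hdtop.eventually_ge_atTop (max t 0)] with n hn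
      have hdn0 : (0:ℝ) ≤ d n := dist_nonneg
      have h := hηd n 0 ⟨le_rfl, hdn0⟩ (max t 0) ⟨ht0, hn⟩
      rw [hη0 n] at h
      simp only [Set.mem_preimage, Metric.mem_closedBall]
      rw [dist_comm, h, abs_of_nonpos (by linarith)]
      linarith
    obtain ⟨a, _, ha⟩ := hcomp.ultrafilter_le_nhds (Ultrafilter.map (fun n => η n (max t 0)) U)
      (le_principal_iff.mpr hmem)
    refine ⟨a, ?_⟩
    rw [Filter.Tendsto, ← Ultrafilter.coe_map]
    exact ha
  choose c hc using hlim
  -- distances between points of c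
  have hdist : ∀ s t : ℝ, dist (c s) (c t) = |max s 0 - max t 0| := by
    intro s t
    have h1 : Tendsto (fun n => dist (η n (max s 0)) (η n (max t 0))) (U : Filter ℕ)
        (nhds (dist (c s) (c t))) := (hc s).dist (hc t)
    have h2 : Tendsto (fun n => dist (η n (max s 0)) (η n (max t 0))) (U : Filter ℕ)
        (nhds (|max s 0 - max t 0|)) := by
      refine Tendsto.congr' ?_ tendsto_const_nhds
      apply hU
      filter_upwards [hdtop.eventually_ge_atTop (max (max s 0) (max t 0))] with n hn
      exact (hηd n (max s 0) ⟨le_max_right _ _, (le_max_left _ _).trans hn⟩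
        (max t 0) ⟨le_max_right _ _, (le_max_right _ _).trans hn⟩).symm
    exact tendsto_nhds_unique h1 h2
  have hc0 : c 0 = p := by
    have h1 : Tendsto (fun n => η n (max (0:ℝ) 0)) (U : Filter ℕ) (nhds p) := by
      have he : (fun n => η n (max (0:ℝ) 0)) = fun _ => p := by
        funext n; rw [max_self]; exact hη0 n
      rw [he]; exact tendsto_const_nhds
    exact tendsto_nhds_unique (hc 0) h1
  have hcray : ∀ s t : ℝ, 0 ≤ s → 0 ≤ t → dist (c s) (c t) = |s - t| := by
    intro s t hs ht
    rw [hdist s t, max_eq_left hs, max_eq_left ht]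
  have hdist0 : ∀ t : ℝ, dist p (c t) = max t 0 := by
    intro t
    rw [← hc0, hdist 0 t, max_self, abs_of_nonpos (by simp), neg_sub, sub_zero]
  -- bounded below
  have hbdd : ∀ x : X, ∀ t : ℝ, -dist x p ≤ dist x (c t) - t := by
    intro x t
    have h1 : dist p (c t) ≤ dist p x + dist x (c t) := dist_triangle _ _ _
    rw [hdist0 t] at h1
    have h2 : t ≤ max t 0 := le_max_left _ _
    rw [dist_comm p x] at h1
    linarith
  -- antitone
  have hant : ∀ x : X, Antitone (fun t => dist x (c t) - t) := by
    intro x s t hst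
    have h1 : dist x (c t) ≤ dist x (c s) + dist (c s) (c t) := dist_triangle _ _ _
    have h2 : dist (c s) (c t) ≤ t - s := by
      rw [hdist s t]
      rcases le_total 0 s with hs | hs
      · rw [max_eq_left hs, max_eq_left (hs.trans hst), abs_of_nonpos (by linarith)]
        linarith
      · rw [max_eq_right hs]
        rcases le_total 0 t with ht | ht
        · rw [max_eq_left ht, abs_of_nonpos (by linarith)]; linarith
        · rw [max_eq_right ht]; simp; linarith
    simp only
    linarith
  -- define bc
  set bc : X → ℝ := fun x => ⨅ t : ℝ, (dist x (c t) - t) with hbcdef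
  have hbcrange : ∀ x : X, BddBelow (Set.range fun t => dist x (c t) - t) :=
    fun x => ⟨-dist x p, by rintro r ⟨t, rfl⟩; exact hbdd x t⟩
  have hbctend : ∀ x : X, Tendsto (fun t => dist x (c t) - t) atTop (nhds (bc x)) := by
    intro x
    exact tendsto_atTop_ciInf (hant x) (hbcrange x)
  refine ⟨c, hc0, hcray, bc, hbctend, ?_, ?_⟩
  · -- the support inequality
    intro x
    -- first: bγ (c t) ≤ bγ p - max t 0
    have hbct : ∀ t : ℝ, bγ (c t) ≤ bγ p - max t 0 := by
      intro t
      set t' := max t 0 with ht'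
      have ht0 : 0 ≤ t' := le_max_right _ _
      have h1 : Tendsto (fun n => bγ (η n t')) (U : Filter ℕ) (nhds (bγ (c t))) :=
        (hbγcont.tendsto (c t)).comp (hc t)
      have h2 : Tendsto (fun n => d n - (n : ℝ) - t') (U : Filter ℕ) (nhds (bγ p - t')) := by
        have : Tendsto (fun n : ℕ => d n - (n : ℝ)) atTop (nhds (bγ p)) := by
          have := (hbγ p).comp tendsto_natCast_atTop_atTop
          exact this
        exact ((this.sub tendsto_const_nhds).mono_left hU)
      refine le_of_tendsto_of_tendsto h1 h2 ?_
      apply hU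
      filter_upwards [hdtop.eventually_ge_atTop t', eventually_ge_atTop 1] with n hn _
      have hdn0 : (0:ℝ) ≤ d n := dist_nonneg
      have hkey : dist (η n t') (γ (n:ℝ)) = d n - t' := by
        have h := hηd n t' ⟨ht0, hn⟩ (d n) ⟨hdn0, le_rfl⟩
        rw [hη1 n] at h
        rw [h, abs_of_nonpos (by linarith)]
        ring
      have := hbasic (η n t') (n : ℝ) n.cast_nonneg
      rw [hkey] at this
      show bγ (η n t') ≤ d n - (n:ℝ) - t'
      linarith
    -- conclude
    have hle : ∀ t : ℝ, bγ x - bγ p ≤ dist x (c t) - t := by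
      intro t
      have h1 := hlip1 x (c t)
      have h2 := hbct t
      have h3 : t ≤ max t 0 := le_max_left _ _
      linarith
    have : bγ x - bγ p ≤ bc x := le_ciInf hle
    linarith
  · -- bc p = 0
    have h1 : bc p ≤ 0 := by
      have := ciInf_le (hbcrange p) (0 : ℝ)
      rw [hdist0 0] at this
      simpa using this
    have h2 : 0 ≤ bc p := by
      refine le_ciInf fun t => ?_
      rw [hdist0 t]
      have := le_max_left t 0
      linarith
    linarith
end
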